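/- Let A be a bounded self-adjoint operator on a real Hilbert space H, and q ∈ H with Aw = q for some w ∈ H and ⟨q, w⟩ < 0 (the analogue of M_cc = −⟨q, U_c⟩ > 0). Then every U ∈ H decomposes uniquely as U = a·w + V with ⟨q, V⟩ = 0, and ⟨AU, U⟩ = a²·⟨q,w⟩ + ⟨AV, V⟩. Consequently, the negative signature of A equals the negative signature of the restriction of A to the orthogonal complement of q plus one. -/

import Mathlib

open scoped RealInnerProductSpace

/-- `n` is the negative signature of the quadratic form `f`: the maximal dimension of a
subspace on which `f` is negative definite. -/
def IsNegSig {V : Type*} [AddCommGroup V] [Module ℝ V] (f : V → ℝ) (n : ℕ) : Prop :=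
  (∃ W : Submodule ℝ V, Module.finrank ℝ W = n ∧ ∀ v ∈ W, v ≠ 0 → f v < 0) ∧
  ∀ m : ℕ, (∃ W : Submodule ℝ V, Module.finrank ℝ W = m ∧ ∀ v ∈ W, v ≠ 0 → f v < 0) → m ≤ n

/-- Grillakis–Shatah–Strauss signature count, stable case `M_cc > 0`
(i.e. `⟨q, w⟩ < 0` with `A w = q`): every `U` decomposes uniquely as `U = a w + V` with
`⟨q, V⟩ = 0`, the quadratic form splits, and `neg(A) = neg(A|_{q^⊥}) + 1`. -/
theorem gss_signature_count_stable
    {H : Type*} [NormedAddCommGroup H] [InnerProductSpace ℝ H] [CompleteSpace H]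
    (A : H →L[ℝ] H) (hA : IsSelfAdjoint A)
    (q w : H) (hw : A w = q) (hqw : ⟪q, w⟫ < 0) :
    (∀ U : H, ∃! p : ℝ × H, ⟪q, p.2⟫ = 0 ∧ U = p.1 • w + p.2) ∧
    (∀ (a : ℝ) (V : H), ⟪q, V⟫ = 0 →
      ⟪A (a • w + V), a • w + V⟫ = a ^ 2 * ⟪q, w⟫ + ⟪A V, V⟫) ∧
    (∀ n m : ℕ, IsNegSig (fun U : H => ⟪A U, U⟫) n →
      IsNegSig (fun U : ((Submodule.span ℝ {q})ᗮ : Submodule ℝ H) => ⟪A U.1, U.1⟫) m →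
      n = m + 1) := by
  have hqw0 : ⟪q, w⟫ ≠ 0 := ne_of_lt hqw
  have hw0 : w ≠ 0 := by
    rintro rfl; exact hqw0 (inner_zero_right q)
  have hsymm : ∀ x y : H, ⟪A x, y⟫ = ⟪x, A y⟫ :=
    fun x y => (ContinuousLinearMap.isSelfAdjoint_iff_isSymmetric.mp hA) x y
  have key : ∀ (a : ℝ) (V : H), ⟪q, V⟫ = 0 →
      ⟪A (a • w + V), a • w + V⟫ = a ^ 2 * ⟪q, w⟫ + ⟪A V, V⟫ := by
    intro a V hV
    have h1 : ⟪A V, w⟫ = 0 := by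
      rw [hsymm, hw, real_inner_comm]; exact hV
    have h2 : A (a • w + V) = a • q + A V := by
      rw [map_add, map_smul, hw]
    rw [h2]
    simp only [inner_add_left, inner_add_right, real_inner_smul_left, real_inner_smul_right,
      hV, h1, mul_zero, add_zero]
    ring
  -- membership in the orthogonal complement of span {q}
  have hmemT : ∀ x : H, x ∈ (Submodule.span ℝ {q})ᗮ ↔ ⟪q, x⟫ = 0 := fun x =>
    Submodule.mem_orthogonal_singleton_iff_inner_right
  refine ⟨?_, key, ?_⟩
  · -- unique decomposition
    intro U
    refine ⟨(⟪q, U⟫ / ⟪q, w⟫, U - (⟪q, U⟫ / ⟪q, w⟫) • w), ⟨?_, by module⟩, ?_⟩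
    · rw [inner_sub_right, real_inner_smul_right, div_mul_cancel₀ _ hqw0, sub_self]
    · rintro ⟨b, V⟩ ⟨h1, h2⟩
      have hb : b = ⟪q, U⟫ / ⟪q, w⟫ := by
        have : ⟪q, U⟫ = b * ⟪q, w⟫ := by
          rw [h2, inner_add_right, real_inner_smul_right, h1, add_zero]
        field_simp [this]
        exact this.symm
      have hV : V = U - (⟪q, U⟫ / ⟪q, w⟫) • w := by
        rw [← hb, h2]; module
      simp [hb, hV]
  · -- signature count
    intro n m hn hm
    -- the quadratic form vanishes at 0
    have hf0 : ⟪A (0 : H), (0 : H)⟫ = 0 := by simp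
    -- Step A : m + 1 ≤ n
    have hA1 : m + 1 ≤ n := by
      obtain ⟨W', hW'rank, hW'neg⟩ := hm.1
      by_cases hfd : FiniteDimensional ℝ W'
      · set W'' : Submodule ℝ H := W'.map (Submodule.span ℝ {q})ᗮ.subtype with hW''
        haveI : FiniteDimensional ℝ W'' := Module.Finite.map _ _
        have hr'' : Module.finrank ℝ W'' = m := by
          rw [hW'', Submodule.finrank_map_subtype_eq, hW'rank]
        have hmem'' : ∀ x ∈ W'', ⟪q, x⟫ = 0 ∧ (x ≠ 0 → ⟪A x, x⟫ < 0) := by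
          rintro x ⟨y, hy, rfl⟩
          refine ⟨(hmemT _).mp y.2, fun hx => ?_⟩
          exact hW'neg y hy (fun h => hx (by simp [h]))
        set S : Submodule ℝ H := W'' ⊔ Submodule.span ℝ {w} with hS
        have hinf : W'' ⊓ Submodule.span ℝ {w} = ⊥ := by
          rw [eq_bot_iff]
          rintro x ⟨hx1, hx2⟩
          obtain ⟨c, rfl⟩ := Submodule.mem_span_singleton.mp hx2
          have := (hmem'' _ hx1).1
          rw [real_inner_smul_right] at this
          rcases mul_eq_zero.mp this with h | h
          · simp [h]
          · exact absurd h hqw0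
        have hrS : Module.finrank ℝ S = m + 1 := by
          have := Submodule.finrank_sup_add_finrank_inf_eq W'' (Submodule.span ℝ {w})
          rw [hinf, hr'', finrank_span_singleton hw0] at this
          simpa using this
        refine hn.2 (m + 1) ⟨S, hrS, ?_⟩
        intro v hv hv0
        rw [hS, Submodule.mem_sup] at hv
        obtain ⟨x, hx, z, hz, rfl⟩ := hv
        obtain ⟨c, rfl⟩ := Submodule.mem_span_singleton.mp hz
        have hxq : ⟪q, x⟫ = 0 := (hmem'' x hx).1
        have hform : ⟪A (x + c • w), x + c • w⟫ = c ^ 2 * ⟪q, w⟫ + ⟪A x, x⟫ := by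
          rw [add_comm x (c • w)]; exact key c x hxq
        show ⟪A (x + c • w), x + c • w⟫ < 0
        rw [hform]
        rcases eq_or_ne c 0 with hc | hc
        · have hx0 : x ≠ 0 := fun h => hv0 (by simp [h, hc])
          have := (hmem'' x hx).2 hx0
          simpa [hc] using this
        · have h1 : c ^ 2 * ⟪q, w⟫ < 0 :=
            mul_neg_of_pos_of_neg (by positivity) hqw
          have h2 : ⟪A x, x⟫ ≤ 0 := by
            rcases eq_or_ne x 0 with h | h
            · simp [h]
            · exact le_of_lt ((hmem'' x hx).2 h)
          linarith
      · have hm0 : m = 0 := by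
          rw [← hW'rank, Module.finrank_of_infinite_dimensional hfd]
        have h1n : 1 ≤ n := by
          refine hn.2 1 ⟨Submodule.span ℝ {w}, finrank_span_singleton hw0, ?_⟩
          intro v hv hv0
          obtain ⟨c, rfl⟩ := Submodule.mem_span_singleton.mp hv
          have hc : c ≠ 0 := fun h => hv0 (by simp [h])
          have hform := key c 0 (inner_zero_right q)
          simp only [add_zero] at hform
          show ⟪A (c • w), c • w⟫ < 0
          rw [hform, hf0, add_zero]
          exact mul_neg_of_pos_of_neg (by positivity) hqw
        omega
    -- Step B : n ≤ m + 1
    have hB1 : n ≤ m + 1 := by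
      obtain ⟨W, hWrank, hWneg⟩ := hn.1
      by_cases hfd : FiniteDimensional ℝ W
      · set φ : W →ₗ[ℝ] ℝ :=
          { toFun := fun u => ⟪q, (u : H)⟫
            map_add' := by intro u v; simp [inner_add_right]
            map_smul' := by intro c u; simp [real_inner_smul_right] } with hφ
        set K₀ : Submodule ℝ W := LinearMap.ker φ with hK₀
        have hrn : Module.finrank ℝ (LinearMap.range φ) + Module.finrank ℝ K₀ = n := by
          rw [hK₀, ← hWrank]; exact LinearMap.finrank_range_add_finrank_ker φ
        have hrange : Module.finrank ℝ (LinearMap.range φ) ≤ 1 := by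
          have := Submodule.finrank_le (LinearMap.range φ)
          simpa using this
        have hnK : n ≤ Module.finrank ℝ K₀ + 1 := by omega
        set K₁ : Submodule ℝ H := K₀.map W.subtype with hK₁
        have hK₁le : K₁ ≤ (Submodule.span ℝ {q})ᗮ := by
          rintro x ⟨y, hy, rfl⟩
          exact (hmemT _).mpr hy
        set K : Submodule ℝ ((Submodule.span ℝ {q})ᗮ : Submodule ℝ H) :=
          K₁.comap (Submodule.span ℝ {q})ᗮ.subtype with hK
        have hrK : Module.finrank ℝ K = Module.finrank ℝ K₀ := by
          rw [hK]
          rw [LinearEquiv.finrank_eq (Submodule.comapSubtypeEquivOfLe hK₁le)]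
          rw [hK₁, Submodule.finrank_map_subtype_eq]
        have hKm : Module.finrank ℝ K₀ ≤ m := by
          refine hm.2 _ ⟨K, hrK, ?_⟩
          rintro v hv hv0
          obtain ⟨y, hy, hyx⟩ := hv
          have hyx' : (y : H) = (v : H) := hyx
          have hvW : (v : H) ∈ W := hyx' ▸ y.2
          have hv0' : (v : H) ≠ 0 := fun h => hv0 (Subtype.ext h)
          exact hWneg _ hvW hv0'
        omega
      · have : n = 0 := by
          rw [← hWrank, Module.finrank_of_infinite_dimensional hfd]
        omega
    omega
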